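/- Fix integers n ≥ 1, k ≥ 1, an index i ∈ {1,…,n}, and reals b > 0, x > 0. Let (V_u(r))_{u∈{1,…,n}, r∈{1,…,k}} be i.i.d. nonnegative real-valued random variables whose log-moment generating function Λ(θ) = log E[e^{θ V}] is finite for all θ ≥ 0. Let A_i(k) = max over s ∈ {1,…,k} of [ Σ_{r=s}^{k−1} Σ_{u=1}^{n} V_u(r) + Σ_{u=1}^{i} V_u(k) − (k−s−1)·n·b ]. For each integer r ≥ 1 define J(r) = sup over θ > 0 of [ θ·(x/r + ((r−2)/r)·b) − ((r + 1 − i/n)/r)·Λ(θ) ]. Then P(A_i(k) ≥ n·x) ≤ Σ_{r=1}^{k} exp( −n·r·J(r) ). -/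

import Mathlib

open MeasureTheory ProbabilityTheory Real
open scoped ENNReal

lemma sumT_eq {n k i s : ℕ} (hs1 : 1 ≤ s) (hsk : s ≤ k) (hik : i ≤ n) (f : ℕ → ℕ → ℝ) :
    ∑ p ∈ ((Finset.Icc 1 n).attach ×ˢ (Finset.Icc 1 k).attach).filter
      (fun p : {u // u ∈ Finset.Icc 1 n} × {r // r ∈ Finset.Icc 1 k} =>
        (s ≤ (p.2 : ℕ) ∧ (p.2 : ℕ) < k) ∨ ((p.2 : ℕ) = k ∧ (p.1 : ℕ) ≤ i)),
      f (p.1 : ℕ) (p.2 : ℕ)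
    = ∑ r ∈ Finset.Ico s k, ∑ u ∈ Finset.Icc 1 n, f u r
      + ∑ u ∈ Finset.Icc 1 i, f u k := by
  rw [Finset.sum_filter, Finset.sum_product]
  have h1 : ∀ u : ℕ, ∑ r ∈ (Finset.Icc 1 k).attach,
      (if (s ≤ (r : ℕ) ∧ (r : ℕ) < k) ∨ ((r : ℕ) = k ∧ u ≤ i) then f u (r : ℕ) else 0)
      = ∑ r ∈ Finset.Icc 1 k, (if (s ≤ r ∧ r < k) ∨ (r = k ∧ u ≤ i) then f u r else 0) := by
    intro u
    exact Finset.sum_attach (Finset.Icc 1 k)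
      (fun r => if (s ≤ r ∧ r < k) ∨ (r = k ∧ u ≤ i) then f u r else 0)
  have h2 : ∑ u ∈ (Finset.Icc 1 n).attach, ∑ r ∈ Finset.Icc 1 k,
        (if (s ≤ r ∧ r < k) ∨ (r = k ∧ (u : ℕ) ≤ i) then f (u : ℕ) r else 0)
      = ∑ u ∈ Finset.Icc 1 n, ∑ r ∈ Finset.Icc 1 k,
        (if (s ≤ r ∧ r < k) ∨ (r = k ∧ u ≤ i) then f u r else 0) :=
    Finset.sum_attach (Finset.Icc 1 n)
      (fun u => ∑ r ∈ Finset.Icc 1 k, (if (s ≤ r ∧ r < k) ∨ (r = k ∧ u ≤ i) then f u r else 0))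
  simp_rw [h1]
  rw [h2]
  have h3 : ∀ u ∈ Finset.Icc 1 n,
      ∑ r ∈ Finset.Icc 1 k, (if (s ≤ r ∧ r < k) ∨ (r = k ∧ u ≤ i) then f u r else 0)
      = ∑ r ∈ Finset.Ico s k, f u r + (if u ≤ i then f u k else 0) := by
    intro u _
    have hsplit : ∀ r ∈ Finset.Icc 1 k,
        (if (s ≤ r ∧ r < k) ∨ (r = k ∧ u ≤ i) then f u r else 0)
        = (if s ≤ r ∧ r < k then f u r else 0) + (if r = k ∧ u ≤ i then f u r else 0) := by
      intro r _
      by_cases hP : s ≤ r ∧ r < k <;> by_cases hQ : r = k ∧ u ≤ i <;>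
        simp [hP, hQ] <;> omega
    rw [Finset.sum_congr rfl hsplit, Finset.sum_add_distrib]
    congr 1
    · rw [← Finset.sum_filter]
      apply Finset.sum_congr _ (fun _ _ => rfl)
      ext r
      simp only [Finset.mem_filter, Finset.mem_Icc, Finset.mem_Ico]
      omega
    · have : ∀ r ∈ Finset.Icc 1 k, (if r = k ∧ u ≤ i then f u r else 0)
          = if u ≤ i then (if r = k then f u r else 0) else 0 := by
        intro r _
        by_cases h1 : r = k <;> by_cases h2 : u ≤ i <;> simp [h1, h2]
      rw [Finset.sum_congr rfl this]
      by_cases h2 : u ≤ i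
      · simp only [h2, if_true]
        rw [Finset.sum_ite_eq' (Finset.Icc 1 k) k (fun r => f u r)]
        simp [Finset.mem_Icc, hs1.trans hsk]
      · simp [h2]
  rw [Finset.sum_congr rfl h3, Finset.sum_add_distrib, Finset.sum_comm]
  congr 1
  rw [← Finset.sum_filter]
  apply Finset.sum_congr _ (fun _ _ => rfl)
  ext u
  simp only [Finset.mem_filter, Finset.mem_Icc]
  omega

lemma le_exp_neg_mul_iSup {p : ℝ≥0∞} (hp : p ≠ ⊤) {a : ℝ} (ha : 0 < a) {c : ℝ → ℝ}
    (h : ∀ θ : ℝ, 0 < θ → p ≤ ENNReal.ofReal (Real.exp (-(a * c θ)))) :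
    p ≤ EReal.exp (((-a : ℝ) : EReal) * ⨆ θ : ℝ, ⨆ _ : 0 < θ, ((c θ : ℝ) : EReal)) := by
  set S : EReal := ⨆ θ : ℝ, ⨆ _ : 0 < θ, ((c θ : ℝ) : EReal) with hS
  have hlt : ∀ z : EReal, z < S → ∃ θ : ℝ, 0 < θ ∧ z < (c θ : EReal) := by
    intro z hz
    rw [hS, lt_iSup_iff] at hz
    obtain ⟨θ, hθ⟩ := hz
    rw [lt_iSup_iff] at hθ
    obtain ⟨hθ0, h'⟩ := hθ
    exact ⟨θ, hθ0, h'⟩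
  by_cases htop : S = ⊤
  · rw [htop, EReal.coe_mul_top_of_neg (by linarith : -a < 0), EReal.exp_bot, le_zero_iff]
    by_contra h0
    have hpt : 0 < p.toReal := ENNReal.toReal_pos h0 hp
    set M : ℝ := -Real.log (p.toReal / 2) / a with hM
    obtain ⟨θ, hθ0, hMθ⟩ := hlt (M : EReal) (htop ▸ EReal.coe_lt_top M)
    have hMθ' : M < c θ := EReal.coe_lt_coe_iff.mp hMθ
    have h1 : p.toReal ≤ Real.exp (-(a * c θ)) :=
      ENNReal.toReal_le_of_le_ofReal (Real.exp_nonneg _) (h θ hθ0)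
    have h2 : Real.exp (-(a * c θ)) ≤ Real.exp (-(a * M)) := by
      apply Real.exp_le_exp.mpr; nlinarith
    have h3 : Real.exp (-(a * M)) = p.toReal / 2 := by
      rw [hM]
      rw [mul_div_assoc', mul_comm, mul_div_assoc, div_self ha.ne', mul_one, neg_neg,
        Real.exp_log (by linarith)]
    linarith [h1.trans h2]
  · have hbot : (c 1 : EReal) ≤ S := by
      rw [hS]
      exact le_iSup_of_le 1 (le_iSup_of_le one_pos le_rfl)
    have hgen : ∀ T : EReal, T ≠ ⊥ → T ≠ ⊤ → ∃ y : ℝ, T = (y : EReal) := by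
      intro T
      induction T with
      | bot => exact fun h _ => absurd rfl h
      | coe y => exact fun _ _ => ⟨y, rfl⟩
      | top => exact fun _ h => absurd rfl h
    have : ∃ y : ℝ, S = (y : EReal) :=
      hgen S (fun hb => by simp [hb] at hbot) htop
    obtain ⟨y, hy⟩ := this
    rw [hy, ← EReal.coe_mul, EReal.exp_coe]
    rw [ENNReal.le_ofReal_iff_toReal_le hp (Real.exp_nonneg _)]
    rcases le_or_gt p.toReal 0 with hple | hppos
    · exact hple.trans (Real.exp_nonneg _)
    · have key : ∀ ε : ℝ, 0 < ε → Real.log p.toReal ≤ -a * y + ε := by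
        intro ε hε
        have hlt' : ((y - ε / a : ℝ) : EReal) < S := by
          rw [hy, EReal.coe_lt_coe_iff]
          have : 0 < ε / a := div_pos hε ha
          linarith
        obtain ⟨θ, hθ0, hyθ⟩ := hlt _ hlt'
        have hyθ' : y - ε / a < c θ := EReal.coe_lt_coe_iff.mp hyθ
        have h1 : p.toReal ≤ Real.exp (-(a * c θ)) :=
          ENNReal.toReal_le_of_le_ofReal (Real.exp_nonneg _) (h θ hθ0)
        have h2 : Real.log p.toReal ≤ -(a * c θ) := by
          rw [← Real.log_exp (-(a * c θ))]
          exact Real.log_le_log hppos h1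
        have : a * (y - ε / a) ≤ a * c θ := by nlinarith
        have haε : a * (ε / a) = ε := by field_simp
        nlinarith
      have hlog : Real.log p.toReal ≤ -a * y := by
        apply le_of_forall_pos_le_add
        intro ε hε
        exact key ε hε
      calc p.toReal = Real.exp (Real.log p.toReal) := (Real.exp_log hppos).symm
        _ ≤ Real.exp (-a * y) := Real.exp_le_exp.mpr hlog

theorem fcfs_outage_union_chernoff_bound {Ω : Type*} [MeasurableSpace Ω]
    (μ : Measure Ω) [IsProbabilityMeasure μ]
    (n k i : ℕ) (hn : 1 ≤ n) (hk : 1 ≤ k) (hi : i ∈ Finset.Icc 1 n)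
    (b x : ℝ) (hb : 0 < b) (hx : 0 < x)
    (V : ℕ → ℕ → Ω → ℝ)
    (hmeas : ∀ u r, Measurable (V u r))
    (hpos : ∀ u r ω, 0 ≤ V u r ω)
    (hident : ∀ u ∈ Finset.Icc 1 n, ∀ r ∈ Finset.Icc 1 k,
      IdentDistrib (V u r) (V 1 1) μ μ)
    (hindep : iIndepFun
      (fun p : (Finset.Icc 1 n : Finset ℕ) × (Finset.Icc 1 k : Finset ℕ) =>
        V p.1.1 p.2.1) μ)
    (hint : ∀ θ : ℝ, 0 ≤ θ → Integrable (fun ω => exp (θ * V 1 1 ω)) μ)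
    (A : Ω → ℝ)
    (hA : ∀ ω, A ω = (Finset.Icc 1 k).sup' (Finset.nonempty_Icc.mpr hk)
      (fun s => ∑ r ∈ Finset.Ico s k, ∑ u ∈ Finset.Icc 1 n, V u r ω
        + ∑ u ∈ Finset.Icc 1 i, V u k ω - ((k : ℝ) - s - 1) * (n * b)))
    (J : ℕ → EReal)
    (hJ : ∀ r : ℕ, J r = ⨆ θ : ℝ, ⨆ _ : 0 < θ,
      ((θ * (x / r + (((r : ℝ) - 2) / r) * b)
        - (((r : ℝ) + 1 - (i : ℝ) / n) / r) * cgf (V 1 1) μ θ : ℝ) : EReal)) :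
    μ {ω | (n : ℝ) * x ≤ A ω}
      ≤ ∑ r ∈ Finset.Icc 1 k, EReal.exp (((-((n : ℝ) * r) : ℝ) : EReal) * J r) := by
  obtain ⟨hi1, hin⟩ := Finset.mem_Icc.mp hi
  have hn0 : (0 : ℝ) < n := by exact_mod_cast hn
  set Xs : ℕ → Ω → ℝ := fun s ω =>
    ∑ r ∈ Finset.Ico s k, ∑ u ∈ Finset.Icc 1 n, V u r ω
      + ∑ u ∈ Finset.Icc 1 i, V u k ω - ((k : ℝ) - s - 1) * (n * b) with hXs
  -- union bound
  have hsub : {ω | (n : ℝ) * x ≤ A ω}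
      ⊆ ⋃ s ∈ Finset.Icc 1 k, {ω | (n : ℝ) * x ≤ Xs s ω} := by
    intro ω hω
    simp only [Set.mem_setOf_eq, hA ω, Finset.le_sup'_iff] at hω
    obtain ⟨s, hs, hle⟩ := hω
    exact Set.mem_biUnion hs hle
  -- per-s Chernoff bound
  have Hs : ∀ s ∈ Finset.Icc 1 k,
      μ {ω | (n : ℝ) * x ≤ Xs s ω}
        ≤ EReal.exp (((-((n : ℝ) * ((k + 1 - s : ℕ) : ℝ)) : ℝ) : EReal) * J (k + 1 - s)) := by
    intro s hs
    obtain ⟨hs1, hsk⟩ := Finset.mem_Icc.mp hs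
    set R : ℝ := ((k + 1 - s : ℕ) : ℝ) with hRdef
    have hRR : R = (k : ℝ) + 1 - s := by
      rw [hRdef]
      have h1 : s ≤ k + 1 := by omega
      push_cast [h1]
      ring
    have hR1 : 1 ≤ R := by
      rw [hRR]
      have : (s : ℝ) ≤ (k : ℝ) := by exact_mod_cast hsk
      linarith
    have hR0 : 0 < R := by linarith
    have ha : 0 < (n : ℝ) * R := by positivity
    rw [hJ (k + 1 - s)]
    -- apply the sup lemma
    refine le_exp_neg_mul_iSup (measure_ne_top μ _) ha
      (c := fun θ => θ * (x / R + ((R - 2) / R) * b)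
        - ((R + 1 - (i : ℝ) / n) / R) * cgf (V 1 1) μ θ) ?_
    intro θ hθ
    set Λ : ℝ := cgf (V 1 1) μ θ with hΛdef
    have hΛ0 : 0 ≤ Λ := by
      have hmgf : 1 ≤ mgf (V 1 1) μ θ := by
        have h1 : (1 : ℝ) = ∫ _ω, (1 : ℝ) ∂μ := by simp
        rw [mgf, h1]
        exact integral_mono (integrable_const 1) (hint θ hθ.le)
          (fun ω => Real.one_le_exp (mul_nonneg hθ.le (hpos 1 1 ω)))
      exact Real.log_nonneg hmgf
    set T : Finset ((Finset.Icc 1 n : Finset ℕ) × (Finset.Icc 1 k : Finset ℕ)) :=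
      ((Finset.Icc 1 n).attach ×ˢ (Finset.Icc 1 k).attach).filter
        (fun p => (s ≤ (p.2 : ℕ) ∧ (p.2 : ℕ) < k) ∨ ((p.2 : ℕ) = k ∧ (p.1 : ℕ) ≤ i))
      with hT
    set W : Ω → ℝ := ∑ p ∈ T,
      (fun p : (Finset.Icc 1 n : Finset ℕ) × (Finset.Icc 1 k : Finset ℕ) =>
        V p.1.1 p.2.1) p with hW
    set aa : ℝ := (n : ℝ) * x + ((k : ℝ) - s - 1) * (n * b) with haa
    have hset : {ω | (n : ℝ) * x ≤ Xs s ω} = {ω | aa ≤ W ω} := by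
      ext ω
      simp only [Set.mem_setOf_eq, hXs, hW, Finset.sum_apply, haa]
      rw [sumT_eq hs1 hsk hin (fun u r' => V u r' ω)]
      rw [le_sub_iff_add_le]
    -- identically distributed transfers
    have hidp : ∀ p : (Finset.Icc 1 n : Finset ℕ) × (Finset.Icc 1 k : Finset ℕ),
        IdentDistrib (fun ω => exp (θ * V p.1.1 p.2.1 ω)) (fun ω => exp (θ * V 1 1 ω)) μ μ := by
      intro p
      exact (hident p.1.1 p.1.2 p.2.1 p.2.2).comp
        (Real.measurable_exp.comp (measurable_const_mul θ))
    have hintp : ∀ p : (Finset.Icc 1 n : Finset ℕ) × (Finset.Icc 1 k : Finset ℕ),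
        Integrable (fun ω => exp (θ * V p.1.1 p.2.1 ω)) μ := by
      intro p
      exact (hidp p).integrable_iff.mpr (hint θ hθ.le)
    have hcgfp : ∀ p : (Finset.Icc 1 n : Finset ℕ) × (Finset.Icc 1 k : Finset ℕ),
        cgf (V p.1.1 p.2.1) μ θ = Λ := by
      intro p
      rw [hΛdef]
      show Real.log (mgf (V p.1.1 p.2.1) μ θ) = Real.log (mgf (V 1 1) μ θ)
      congr 1
      exact (hidp p).integral_eq
    have hintsum : Integrable (fun ω => exp (θ * W ω)) μ :=
      hindep.integrable_exp_mul_sum (fun p => hmeas _ _) (fun p _ => hintp p)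
    have hchern := measure_ge_le_exp_cgf aa hθ.le hintsum
    have hcgf : cgf W μ θ = (((k : ℝ) - s) * n + i) * Λ := by
      rw [hW, hindep.cgf_sum (fun p => hmeas _ _) (fun p _ => hintp p)]
      calc ∑ p ∈ T, cgf (V p.1.1 p.2.1) μ θ = ∑ _p ∈ T, Λ :=
            Finset.sum_congr rfl (fun p _ => hcgfp p)
        _ = (((k : ℝ) - s) * n + i) * Λ := by
            rw [hT]
            rw [sumT_eq hs1 hsk hin (fun _ _ => Λ)]
            simp only [Finset.sum_const, Nat.card_Ico, Nat.card_Icc, Nat.add_sub_cancel, nsmul_eq_mul]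
            have h1 : ((k - s : ℕ) : ℝ) = (k : ℝ) - s := by
              push_cast [hsk]; ring
            rw [h1]
            ring
    -- real inequality
    have hre : -θ * aa + (((k : ℝ) - s) * n + i) * Λ
        ≤ -((n : ℝ) * R * (θ * (x / R + ((R - 2) / R) * b)
            - ((R + 1 - (i : ℝ) / n) / R) * Λ)) := by
      have e1 : (n : ℝ) * R * (θ * (x / R + ((R - 2) / R) * b)
          - ((R + 1 - (i : ℝ) / n) / R) * Λ)
          = θ * ((n : ℝ) * x) + θ * (n : ℝ) * (R - 2) * b
            - ((n : ℝ) * R + n - i) * Λ := by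
        field_simp
      have e2 : -θ * aa = -(θ * ((n : ℝ) * x) + θ * (n : ℝ) * (R - 2) * b) := by
        rw [haa, hRR]; ring
      have hiR : (i : ℝ) ≤ (n : ℝ) := by exact_mod_cast hin
      have key : (((k : ℝ) - s) * n + i) * Λ ≤ ((n : ℝ) * R + n - i) * Λ := by
        have hks : (k : ℝ) - s = R - 1 := by rw [hRR]; ring
        rw [hks]
        nlinarith
      rw [e1, e2]
      linarith
    -- combine
    rw [hset]
    rw [ENNReal.le_ofReal_iff_toReal_le (measure_ne_top μ _) (Real.exp_nonneg _)]
    calc (μ {ω | aa ≤ W ω}).toReal ≤ exp (-θ * aa + cgf W μ θ) := hchern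
      _ ≤ exp (-((n : ℝ) * R * (θ * (x / R + ((R - 2) / R) * b)
            - ((R + 1 - (i : ℝ) / n) / R) * Λ))) := by
          rw [Real.exp_le_exp, hcgf]
          exact hre
  -- put it together
  calc μ {ω | (n : ℝ) * x ≤ A ω}
      ≤ μ (⋃ s ∈ Finset.Icc 1 k, {ω | (n : ℝ) * x ≤ Xs s ω}) := measure_mono hsub
    _ ≤ ∑ s ∈ Finset.Icc 1 k, μ {ω | (n : ℝ) * x ≤ Xs s ω} :=
        measure_biUnion_finset_le _ _
    _ ≤ ∑ s ∈ Finset.Icc 1 k,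
          EReal.exp (((-((n : ℝ) * ((k + 1 - s : ℕ) : ℝ)) : ℝ) : EReal) * J (k + 1 - s)) :=
        Finset.sum_le_sum Hs
    _ = ∑ r ∈ Finset.Icc 1 k, EReal.exp (((-((n : ℝ) * r) : ℝ) : EReal) * J r) := by
        refine Finset.sum_nbij' (fun a => k + 1 - a) (fun a => k + 1 - a) ?_ ?_ ?_ ?_ ?_
        · intro a ha; simp only [Finset.mem_Icc] at *; omega
        · intro a ha; simp only [Finset.mem_Icc] at *; omega
        · intro a ha; simp only [Finset.mem_Icc] at *; omega
        · intro a ha; simp only [Finset.mem_Icc] at *; omega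
        · intro a ha; rfl
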